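/- Let F be a finite field. With probability 1−o(1) (as |F| → ∞), a uniformly random function λ : F → F has relative Hamming distance greater than 1/3 from every polynomial over F of degree at most |F|/2. -/

import Mathlib

open Finset

lemma fix_card {F : Type} [Fintype F] [DecidableEq F] (f : F → F) (S : Finset F) :
    (Finset.univ.filter (fun lam : F → F => ∀ x ∉ S, lam x = f x)).card
      ≤ Fintype.card F ^ S.card := by
  classical
  have h := Finset.card_le_card_of_injOn
    (s := Finset.univ.filter (fun lam : F → F => ∀ x ∉ S, lam x = f x))
    (t := (Finset.univ : Finset (S → F)))
    (fun (lam : F → F) (x : S) => lam x.1) (fun a _ => Finset.mem_univ _) ?_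
  · simpa [Fintype.card_fun, Fintype.card_coe] using h
  · intro a ha b hb hab
    simp only [Finset.coe_filter, Set.mem_setOf_eq, Finset.mem_univ, true_and] at ha hb
    funext x
    by_cases hx : x ∈ S
    · exact congrFun hab ⟨x, hx⟩
    · rw [ha x hx, hb x hx]

lemma ball_card {F : Type} [Fintype F] [DecidableEq F] (f : F → F) (r : ℕ)
    (hr : r ≤ Fintype.card F) :
    (Finset.univ.filter (fun lam : F → F => hammingDist lam f ≤ r)).card
      ≤ (Fintype.card F).choose r * Fintype.card F ^ r := by
  classical
  have hsub : Finset.univ.filter (fun lam : F → F => hammingDist lam f ≤ r) ⊆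
      (Finset.powersetCard r (Finset.univ : Finset F)).biUnion
        (fun S => Finset.univ.filter (fun lam : F → F => ∀ x ∉ S, lam x = f x)) := by
    intro lam hlam
    simp only [Finset.mem_filter, Finset.mem_univ, true_and] at hlam
    have hcard : (Finset.univ.filter fun x => lam x ≠ f x).card ≤ r := hlam
    obtain ⟨S, hTS, hScard⟩ := Finset.exists_superset_card_eq hcard hr
    refine Finset.mem_biUnion.2 ⟨S, Finset.mem_powersetCard_univ.2 hScard, ?_⟩
    simp only [Finset.mem_filter, Finset.mem_univ, true_and]
    intro x hx
    by_contra hne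
    exact hx (hTS (by simp [hne]))
  calc (Finset.univ.filter (fun lam : F → F => hammingDist lam f ≤ r)).card
      ≤ ((Finset.powersetCard r (Finset.univ : Finset F)).biUnion _).card :=
        Finset.card_le_card hsub
    _ ≤ ∑ S ∈ Finset.powersetCard r (Finset.univ : Finset F),
          (Finset.univ.filter (fun lam : F → F => ∀ x ∉ S, lam x = f x)).card :=
        Finset.card_biUnion_le
    _ ≤ (Finset.powersetCard r (Finset.univ : Finset F)).card • (Fintype.card F ^ r) := by
        refine Finset.sum_le_card_nsmul _ _ _ (fun S hS => ?_)
        have h := fix_card f S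
        rwa [Finset.mem_powersetCard_univ.1 hS] at h
    _ = (Fintype.card F).choose r * Fintype.card F ^ r := by
        rw [smul_eq_mul, Finset.card_powersetCard, Finset.card_univ]


open scoped Classical

/-- With probability `1−o(1)` (as `|F| → ∞`), a uniformly random function
`λ : F → F` on a finite field `F` has relative Hamming distance greater than `1/3` from
every polynomial over `F` of degree at most `|F|/2`. -/
theorem stmt2 :
    ∀ ε : ℝ, 0 < ε → ∃ N : ℕ,
      ∀ (F : Type) [Field F] [Fintype F] [DecidableEq F],
        N ≤ Fintype.card F →
        1 - ε ≤
          ((Finset.univ.filter (fun lam : F → F =>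
              ∀ g : Polynomial F, g.natDegree ≤ Fintype.card F / 2 →
                (1 : ℝ) / 3 <
                  (hammingDist lam (fun x => g.eval x) : ℝ) / (Fintype.card F : ℝ))).card : ℝ)
            / (Fintype.card (F → F) : ℝ) := by
  intro ε hε
  obtain ⟨n0, hn0⟩ := pow_unbounded_of_one_lt ((2:ℝ)^35 / ε) (by norm_num : (1:ℝ) < 2)
  refine ⟨max (2^42) n0, ?_⟩
  intro F _ _ _ hN
  set q := Fintype.card F with hqdef
  have hq42 : 2^42 ≤ q := le_trans (le_max_left _ _) hN
  have hqn0 : n0 ≤ q := le_trans (le_max_right _ _) hN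
  have hq1 : 1 ≤ q := by omega
  have hq0R : (0:ℝ) < (q:ℝ) := by exact_mod_cast hq1
  set m := q / 2 + 1 with hm
  set r := q / 3 with hr
  set s := q / 6 with hs
  set good := Finset.univ.filter (fun lam : F → F =>
      ∀ g : Polynomial F, g.natDegree ≤ q / 2 →
        (1 : ℝ) / 3 < (hammingDist lam (fun x => g.eval x) : ℝ) / (q : ℝ)) with hgood
  set bad := Finset.univ.filter (fun lam : F → F =>
      ¬ ∀ g : Polynomial F, g.natDegree ≤ q / 2 →
        (1 : ℝ) / 3 < (hammingDist lam (fun x => g.eval x) : ℝ) / (q : ℝ)) with hbad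
  -- bad set is covered by balls around low-degree polynomial evaluations
  set D : Finset (F → F) := (Finset.univ : Finset (Fin m → F)).image
    (fun c => fun x : F => ∑ i : Fin m, c i * x ^ (i : ℕ)) with hD
  have hbadsub : bad ⊆ D.biUnion
      (fun f => Finset.univ.filter (fun lam : F → F => hammingDist lam f ≤ r)) := by
    intro lam hlam
    rw [hbad, Finset.mem_filter] at hlam
    obtain ⟨-, hnot⟩ := hlam
    push_neg at hnot
    obtain ⟨g, hdeg, hdist⟩ := hnot
    have h3 : (hammingDist lam (fun x => g.eval x) : ℝ) / (q : ℝ) ≤ 1/3 := hdist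
    have h3' : (hammingDist lam (fun x => g.eval x)) * 3 ≤ 1 * q := by
      rw [div_le_div_iff₀ hq0R (by norm_num)] at h3
      exact_mod_cast h3
    have hdr : hammingDist lam (fun x => g.eval x) ≤ r := by omega
    refine Finset.mem_biUnion.2 ⟨fun x => g.eval x, ?_, ?_⟩
    · rw [hD]
      refine Finset.mem_image.2 ⟨fun i : Fin m => g.coeff i, Finset.mem_univ _, ?_⟩
      funext x
      rw [Polynomial.eval_eq_sum_range' (n := m) (by omega) x, ← Fin.sum_univ_eq_sum_range]
    · simp only [Finset.mem_filter, Finset.mem_univ, true_and]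
      exact hdr
  -- count the bad set
  have hDcard : D.card ≤ q ^ m := by
    calc D.card ≤ (Finset.univ : Finset (Fin m → F)).card := Finset.card_image_le
      _ = q ^ m := by rw [Finset.card_univ, Fintype.card_fun, Fintype.card_fin]
  have hbadcard : bad.card ≤ q ^ m * (q.choose r * q ^ r) := by
    calc bad.card ≤ (D.biUnion
          (fun f => Finset.univ.filter (fun lam : F → F => hammingDist lam f ≤ r))).card :=
          Finset.card_le_card hbadsub
      _ ≤ ∑ f ∈ D, (Finset.univ.filter (fun lam : F → F => hammingDist lam f ≤ r)).card :=
          Finset.card_biUnion_le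
      _ ≤ D.card • (q.choose r * q ^ r) :=
          Finset.sum_le_card_nsmul _ _ _ (fun f _ => ball_card f r (by omega))
      _ ≤ q ^ m * (q.choose r * q ^ r) := by
          rw [smul_eq_mul]; exact Nat.mul_le_mul_right _ hDcard
  have hchoose : q.choose r ≤ 2 ^ q := by
    rw [← Nat.sum_range_choose q]
    exact Finset.single_le_sum (f := fun i => q.choose i) (fun i _ => Nat.zero_le _)
      (Finset.mem_range.2 (by omega))
  -- Nat inequality A
  have hA : bad.card * q ^ s ≤ 2 ^ q * q ^ (q + 1) := by
    calc bad.card * q ^ s ≤ (q ^ m * (2 ^ q * q ^ r)) * q ^ s := by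
          refine Nat.mul_le_mul_right _ (le_trans hbadcard ?_)
          exact Nat.mul_le_mul_left _ (Nat.mul_le_mul_right _ hchoose)
      _ = 2 ^ q * q ^ (m + r + s) := by ring
      _ ≤ 2 ^ q * q ^ (q + 1) :=
          Nat.mul_le_mul_left _ (Nat.pow_le_pow_right hq1 (by omega))
  -- Nat inequality B
  have hB : 2 ^ q * q * 2 ^ q ≤ 2 ^ 35 * q ^ s := by
    calc 2 ^ q * q * 2 ^ q ≤ 2 ^ q * 2 ^ q * 2 ^ q :=
          Nat.mul_le_mul_right _ (Nat.mul_le_mul_left _ (Nat.lt_two_pow_self (n := q)).le)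
      _ = 2 ^ (3 * q) := by ring
      _ ≤ 2 ^ (35 + 42 * s) := Nat.pow_le_pow_right (by norm_num) (by omega)
      _ = 2 ^ 35 * (2 ^ 42) ^ s := by rw [pow_add, pow_mul]
      _ ≤ 2 ^ 35 * q ^ s := Nat.mul_le_mul_left _ (Nat.pow_le_pow_left hq42 s)
  -- real: 2^35 ≤ ε * 2^q
  have hε2 : (2:ℝ) ^ 35 ≤ ε * 2 ^ q := by
    have h1 : (2:ℝ) ^ 35 / ε < 2 ^ q :=
      lt_of_lt_of_le hn0 (pow_le_pow_right₀ one_le_two hqn0)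
    rw [div_lt_iff₀ hε] at h1
    linarith
  -- real: bad ≤ ε * q^q
  have hbadR : (bad.card : ℝ) ≤ ε * (q:ℝ) ^ q := by
    have hpos : (0:ℝ) < (q:ℝ) ^ s * 2 ^ q := by positivity
    refine le_of_mul_le_mul_right ?_ hpos
    have hAR : (bad.card : ℝ) * (q:ℝ) ^ s ≤ 2 ^ q * (q:ℝ) ^ (q + 1) := by exact_mod_cast hA
    have hBR : (2:ℝ) ^ q * q * 2 ^ q ≤ 2 ^ 35 * (q:ℝ) ^ s := by exact_mod_cast hB
    calc (bad.card : ℝ) * ((q:ℝ) ^ s * 2 ^ q)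
        = ((bad.card : ℝ) * (q:ℝ) ^ s) * 2 ^ q := by ring
      _ ≤ (2 ^ q * (q:ℝ) ^ (q + 1)) * 2 ^ q := by
          refine mul_le_mul_of_nonneg_right hAR (by positivity)
      _ = ((2:ℝ) ^ q * q * 2 ^ q) * (q:ℝ) ^ q := by ring
      _ ≤ (2 ^ 35 * (q:ℝ) ^ s) * (q:ℝ) ^ q := by
          refine mul_le_mul_of_nonneg_right hBR (by positivity)
      _ ≤ ((ε * 2 ^ q) * (q:ℝ) ^ s) * (q:ℝ) ^ q := by
          refine mul_le_mul_of_nonneg_right (mul_le_mul_of_nonneg_right hε2 (by positivity))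
            (by positivity)
      _ = ε * (q:ℝ) ^ q * ((q:ℝ) ^ s * 2 ^ q) := by ring
  -- finish
  have hsum : good.card + bad.card = q ^ q := by
    rw [hgood, hbad, Finset.card_filter_add_card_filter_not, Finset.card_univ,
      Fintype.card_fun]
  have hTot : (Fintype.card (F → F) : ℝ) = (q:ℝ) ^ q := by
    rw [Fintype.card_fun]; push_cast; ring
  rw [hTot, le_div_iff₀ (by positivity)]
  have hsumR : (good.card : ℝ) + bad.card = (q:ℝ) ^ q := by exact_mod_cast hsum
  nlinarith [hbadR, hsumR]
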